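/- A function f ∈ L²(ℝ) belongs to V₀ = closure of span{T^k φ : k ∈ ℤ} if and only if f̂ = H·φ̂ for some 1-periodic measurable function H : ℝ → ℂ with H·φ̂ ∈ L²(ℝ). -/

import Mathlib

open MeasureTheory Complex Filter Submodule Set AddCircle
open scoped Real ENNReal Topology
noncomputable section
namespace SIH15

def eK (k : ℤ) (θ : ℝ) : ℂ := Complex.exp (((-2 * Real.pi * k * θ : ℝ) : ℂ) * Complex.I)

lemma eK_norm (k : ℤ) (θ : ℝ) : ‖eK k θ‖ = 1 := by
  rw [eK, Complex.norm_exp_ofReal_mul_I]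

lemma eK_continuous (k : ℤ) : Continuous (eK k) := by unfold eK; fun_prop

lemma eK_kernel (k : ℤ) (θ : ℝ) :
    eK k θ = Complex.exp (-2 * (Real.pi : ℂ) * Complex.I * (k : ℂ) * (θ : ℂ)) := by
  rw [eK]; congr 1; push_cast; ring

abbrev E2 := Lp ℂ 2 (volume : Measure ℝ)

lemma elp_eq_nnnorm {α} [MeasurableSpace α] {m : Measure α} (u : Lp ℂ 2 m) :
    eLpNorm (u : α → ℂ) 2 m = (‖u‖₊ : ℝ≥0∞) := by
  rw [Lp.nnnorm_def, ENNReal.coe_toNNReal (Lp.eLpNorm_ne_top u)]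

lemma elp_sub_eq_nnnorm {α} [MeasurableSpace α] {m : Measure α} (u v : Lp ℂ 2 m) :
    eLpNorm ((u : α → ℂ) - (v : α → ℂ)) 2 m = (‖u - v‖₊ : ℝ≥0∞) := by
  rw [← elp_eq_nnnorm (u - v), eLpNorm_congr_ae (Lp.coeFn_sub u v)]

lemma elp_unimodular {c A : ℝ → ℂ} (hc : ∀ θ, ‖c θ‖ = 1) :
    eLpNorm (fun θ => c θ * A θ) 2 (volume : Measure ℝ) = eLpNorm A 2 volume :=
  eLpNorm_congr_norm_ae (Eventually.of_forall fun θ => by rw [norm_mul, hc θ, one_mul])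

lemma conv_nnnorm {α} [MeasurableSpace α] {m : Measure α} (z : ℕ → Lp ℂ 2 m) (l : Lp ℂ 2 m)
    (hz : Tendsto z atTop (𝓝 l)) :
    Tendsto (fun n => (‖z n - l‖₊ : ℝ≥0∞)) atTop (𝓝 0) := by
  have h0 : Tendsto (fun n => ‖z n - l‖) atTop (𝓝 0) :=
    tendsto_iff_norm_sub_tendsto_zero.mp hz
  simpa [← enorm_eq_nnnorm] using ENNReal.tendsto_ofReal h0

lemma shift_one
    (T : E2 ≃L[ℂ] E2)
    (hT : ∀ f : E2, ∀ᵐ x : ℝ, (T f : ℝ → ℂ) x = (f : ℝ → ℂ) (x - 1))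
    (F2 : E2 ≃ₗᵢ[ℂ] E2)
    (hF2 : ∀ (g : ℝ → ℂ), Integrable g → ∀ hg2 : MemLp g 2 (volume : Measure ℝ),
      (F2 (hg2.toLp g) : ℝ → ℂ) =ᵐ[volume] fun y : ℝ =>
        ∫ x : ℝ, g x * Complex.exp (-2 * (Real.pi : ℂ) * Complex.I * (x : ℂ) * (y : ℂ)))
    (u : E2) :
    (F2 (T u) : ℝ → ℂ) =ᵐ[volume] fun θ => eK 1 θ * (F2 u : ℝ → ℂ) θ := by
  have key : ∀ v : E2, Integrable (v : ℝ → ℂ) volume →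
      ((F2 (T v) : ℝ → ℂ) =ᵐ[volume] fun θ => eK 1 θ * (F2 v : ℝ → ℂ) θ) := by
    intro v hv1
    have hv2 : MemLp (v : ℝ → ℂ) 2 volume := Lp.memLp v
    have hfv := hF2 _ hv1 hv2
    rw [Lp.toLp_coeFn v hv2] at hfv
    set v' : ℝ → ℂ := fun x => (v : ℝ → ℂ) (x - 1) with hv'def
    have hmp : MeasurePreserving (fun x : ℝ => x - 1) volume volume :=
      measurePreserving_sub_right volume 1
    have hv'1 : Integrable v' volume :=
      memLp_one_iff_integrable.1 ((memLp_one_iff_integrable.2 hv1).comp_measurePreserving hmp)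
    have hv'2 : MemLp v' 2 volume := hv2.comp_measurePreserving hmp
    have h4 : (T v : ℝ → ℂ) =ᵐ[volume] v' := hT v
    have hTv : T v = hv'2.toLp v' := Lp.ext (h4.trans (MemLp.coeFn_toLp hv'2).symm)
    have hfv' := hF2 v' hv'1 hv'2
    rw [← hTv] at hfv'
    have hcalc : ∀ y : ℝ, (∫ x : ℝ, v' x * Complex.exp (-2 * (Real.pi:ℂ) * Complex.I * x * y))
        = eK 1 y * ∫ x : ℝ, (v : ℝ → ℂ) x * Complex.exp (-2 * (Real.pi:ℂ) * Complex.I * x * y) := by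
      intro y
      have h1 : (fun x : ℝ => v' x * Complex.exp (-2 * (Real.pi:ℂ) * Complex.I * x * y))
          = fun x : ℝ => (fun t : ℝ =>
              (v : ℝ → ℂ) t * Complex.exp (-2 * (Real.pi:ℂ) * Complex.I * (((t+1 : ℝ)):ℂ) * y)) (x - 1) := by
        funext x
        simp only [hv'def]
        norm_num
      rw [h1, integral_sub_right_eq_self (μ := volume)
        (fun t : ℝ => (v : ℝ → ℂ) t * Complex.exp (-2 * (Real.pi:ℂ) * Complex.I * (((t+1:ℝ)):ℂ) * y)) (1:ℝ)]
      have h2 : ∀ t : ℝ, (v : ℝ → ℂ) t * Complex.exp (-2 * (Real.pi:ℂ) * Complex.I * (((t+1:ℝ)):ℂ) * y)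
          = eK 1 y * ((v : ℝ → ℂ) t * Complex.exp (-2 * (Real.pi:ℂ) * Complex.I * t * y)) := by
        intro t
        have h3 : Complex.exp (-2 * (Real.pi:ℂ) * Complex.I * (((t+1:ℝ)):ℂ) * y)
            = Complex.exp (-2*(Real.pi:ℂ)*Complex.I*((1:ℤ):ℂ)*y) * Complex.exp (-2*(Real.pi:ℂ)*Complex.I*t*y) := by
          rw [← Complex.exp_add]; congr 1; push_cast; ring
        rw [h3, eK_kernel]; ring
      simp_rw [h2]
      rw [integral_const_mul]
    filter_upwards [hfv', hfv] with y h1 h2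
    rw [h1, hcalc y, h2]
  -- density argument
  have hdr := Lp.simpleFunc.denseRange (E := ℂ) (μ := (volume : Measure ℝ)) (p := 2) (by norm_num)
  obtain ⟨y, hy_mem, hy_tendsto⟩ := mem_closure_iff_seq_limit.mp (hdr u)
  have hyint : ∀ n, Integrable (y n : ℝ → ℂ) volume := by
    intro n
    obtain ⟨s, hs⟩ := hy_mem n
    have h1 : (Lp.simpleFunc.toSimpleFunc s : ℝ → ℂ) =ᵐ[volume] ((s : E2) : ℝ → ℂ) :=
      Lp.simpleFunc.toSimpleFunc_eq_toFun s
    have h2 : MemLp ((Lp.simpleFunc.toSimpleFunc s : SimpleFunc ℝ ℂ) : ℝ → ℂ) 2 volume :=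
      Lp.simpleFunc.memLp s
    have h3 : Integrable ((Lp.simpleFunc.toSimpleFunc s : SimpleFunc ℝ ℂ) : ℝ → ℂ) volume :=
      (SimpleFunc.memLp_iff_integrable (by norm_num) (by norm_num)).mp h2
    rw [← hs]
    exact h3.congr h1
  set A := eLpNorm ((F2 (T u) : ℝ → ℂ) - fun θ => eK 1 θ * (F2 u : ℝ → ℂ) θ) 2 volume with hA
  have haesm : AEStronglyMeasurable ((F2 (T u) : ℝ → ℂ) - fun θ => eK 1 θ * (F2 u : ℝ → ℂ) θ) volume :=
    (Lp.aestronglyMeasurable _).sub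
      ((eK_continuous 1).aestronglyMeasurable.mul (Lp.aestronglyMeasurable _))
  have hbound : ∀ n, A ≤ (‖T (y n) - T u‖₊ : ℝ≥0∞) + (‖y n - u‖₊ : ℝ≥0∞) := by
    intro n
    have hkey := key (y n) (hyint n)
    have hsplit : ((F2 (T u) : ℝ → ℂ) - fun θ => eK 1 θ * (F2 u : ℝ → ℂ) θ)
        =ᵐ[volume] fun θ => ((F2 (T u) : ℝ → ℂ) θ - (F2 (T (y n)) : ℝ → ℂ) θ)
          + (eK 1 θ * ((F2 (y n) : ℝ → ℂ) θ - (F2 u : ℝ → ℂ) θ)) := by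
      filter_upwards [hkey] with θ hθ
      simp only [Pi.sub_apply]
      rw [hθ]
      ring
    rw [hA, eLpNorm_congr_ae hsplit]
    refine le_trans (eLpNorm_add_le
      ((Lp.aestronglyMeasurable (F2 (T u))).sub (Lp.aestronglyMeasurable (F2 (T (y n)))))
      ((eK_continuous 1).aestronglyMeasurable.mul
        ((Lp.aestronglyMeasurable (F2 (y n))).sub (Lp.aestronglyMeasurable (F2 u))))
      one_le_two) ?_
    have e1 : eLpNorm (fun θ => (F2 (T u) : ℝ → ℂ) θ - (F2 (T (y n)) : ℝ → ℂ) θ) 2 volume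
        = (‖T (y n) - T u‖₊ : ℝ≥0∞) := by
      rw [show (fun θ => (F2 (T u) : ℝ → ℂ) θ - (F2 (T (y n)) : ℝ → ℂ) θ)
            = ((F2 (T u) : ℝ → ℂ) - (F2 (T (y n)) : ℝ → ℂ)) from rfl,
        elp_sub_eq_nnnorm, ← map_sub, LinearIsometryEquiv.nnnorm_map, ← nnnorm_neg, neg_sub]
    have e2 : eLpNorm (fun θ => eK 1 θ * ((F2 (y n) : ℝ → ℂ) θ - (F2 u : ℝ → ℂ) θ)) 2 volume
        = (‖y n - u‖₊ : ℝ≥0∞) := by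
      rw [elp_unimodular (eK_norm 1),
        show (fun θ => (F2 (y n) : ℝ → ℂ) θ - (F2 u : ℝ → ℂ) θ)
            = ((F2 (y n) : ℝ → ℂ) - (F2 u : ℝ → ℂ)) from rfl,
        elp_sub_eq_nnnorm, ← map_sub, LinearIsometryEquiv.nnnorm_map]
    rw [e1, e2]
  have ht1 : Tendsto (fun n => T (y n)) atTop (𝓝 (T u)) :=
    (T.continuous.tendsto u).comp hy_tendsto
  have hsum := (conv_nnnorm _ _ ht1).add (conv_nnnorm _ _ hy_tendsto)
  rw [add_zero] at hsum
  have hA0 : A = 0 := le_antisymm (ge_of_tendsto' hsum hbound) (zero_le)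
  have hzero := (eLpNorm_eq_zero_iff haesm (by norm_num)).mp hA0
  filter_upwards [hzero] with θ hθ
  have : (F2 (T u) : ℝ → ℂ) θ - eK 1 θ * (F2 u : ℝ → ℂ) θ = 0 := hθ
  linear_combination this


lemma eK_zero (θ : ℝ) : eK 0 θ = 1 := by
  simp [eK]

lemma eK_add_one (k : ℤ) (θ : ℝ) : eK (k + 1) θ = eK 1 θ * eK k θ := by
  rw [eK, eK, eK, ← Complex.exp_add, ← add_mul, ← Complex.ofReal_add]
  congr 3; push_cast; ring

lemma eK_mul_eK_neg (k : ℤ) (θ : ℝ) : eK k θ * eK (-k) θ = 1 := by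
  rw [eK, eK, ← Complex.exp_add, ← add_mul, ← Complex.ofReal_add]
  norm_num

lemma eK_sub_one (k : ℤ) (θ : ℝ) : eK (k - 1) θ = eK (-1) θ * eK k θ := by
  rw [eK, eK, eK, ← Complex.exp_add, ← add_mul, ← Complex.ofReal_add]
  congr 3; push_cast; ring

lemma shift_pow
    (T : E2 ≃L[ℂ] E2)
    (hT : ∀ f : E2, ∀ᵐ x : ℝ, (T f : ℝ → ℂ) x = (f : ℝ → ℂ) (x - 1))
    (F2 : E2 ≃ₗᵢ[ℂ] E2)
    (hF2 : ∀ (g : ℝ → ℂ), Integrable g → ∀ hg2 : MemLp g 2 (volume : Measure ℝ),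
      (F2 (hg2.toLp g) : ℝ → ℂ) =ᵐ[volume] fun y : ℝ =>
        ∫ x : ℝ, g x * Complex.exp (-2 * (Real.pi : ℂ) * Complex.I * (x : ℂ) * (y : ℂ)))
    (φ : E2) (k : ℤ) :
    (F2 ((T ^ k) φ) : ℝ → ℂ) =ᵐ[volume] fun θ => eK k θ * (F2 φ : ℝ → ℂ) θ := by
  induction k using Int.induction_on with
  | zero =>
    have h1 : (T ^ (0:ℤ)) φ = φ := by rw [zpow_zero]; rfl
    rw [h1]
    filter_upwards with θ
    rw [eK_zero, one_mul]
  | succ n ih =>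
    have hsplit : T ^ ((n : ℤ) + 1) = T * T ^ (n : ℤ) := by
      rw [add_comm, zpow_add, zpow_one]
    have happ : (T ^ ((n : ℤ) + 1)) φ = T ((T ^ (n : ℤ)) φ) := by
      rw [hsplit]; rfl
    rw [happ]
    filter_upwards [shift_one T hT F2 hF2 ((T ^ (n : ℤ)) φ), ih] with θ h1 h2
    rw [h1, h2, eK_add_one]
    ring
  | pred n ih =>
    set v := (T ^ (-(n : ℤ) - 1)) φ with hv
    have happ : T v = (T ^ (-(n : ℤ))) φ := by
      have : T * T ^ (-(n : ℤ) - 1) = T ^ (-(n : ℤ)) := by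
        nth_rewrite 1 [← zpow_one (a := T)]
        rw [← zpow_add]
        congr 1
        ring
      rw [hv, ← this]; rfl
    have h1 := shift_one T hT F2 hF2 v
    rw [happ] at h1
    filter_upwards [h1, ih] with θ hθ1 hθ2
    -- hθ1 : F2 ((T^(-n)) φ) θ = eK 1 θ * F2 v θ; hθ2 : F2((T^(-n))φ) θ = eK (-n) θ * g θ
    have h3 : eK 1 θ * (F2 v : ℝ → ℂ) θ = eK (-(n:ℤ)) θ * (F2 φ : ℝ → ℂ) θ := by
      rw [← hθ1, hθ2]
    have h4 := congrArg (fun z => eK (-1) θ * z) h3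
    rw [← mul_assoc, show eK (-1) θ * eK 1 θ = 1 by rw [mul_comm]; exact eK_mul_eK_neg 1 θ, one_mul] at h4
    rw [h4, ← mul_assoc, show (-(n:ℤ) - 1 : ℤ) = (-(n:ℤ)) - 1 from rfl, eK_sub_one]


instance : Fact ((0:ℝ) < 1) := ⟨one_pos⟩

lemma fourier_eq_eK (k : ℤ) (θ : ℝ) :
    (fourier (-k) : C(AddCircle (1:ℝ), ℂ)) (θ : AddCircle (1:ℝ)) = eK k θ := by
  rw [fourier_coe_apply, eK]
  congr 1; push_cast; ring

lemma elp2_eq {α} [MeasurableSpace α] (m : Measure α) (h : α → ℂ) :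
    eLpNorm h 2 m = (∫⁻ x, (‖h x‖₊ : ℝ≥0∞) ^ (2:ℝ) ∂m) ^ (1/2 : ℝ) := by
  rw [eLpNorm_eq_lintegral_rpow_enorm_toReal (by norm_num) (by norm_num)]
  norm_num [enorm_eq_nnnorm]

lemma measurable_mk1 : Measurable (fun θ : ℝ => (θ : AddCircle (1:ℝ))) :=
  AddCircle.measurable_mk'

/-- the periodization measure `μ(A) = ∫_{π⁻¹ A} ‖g‖²` on the circle -/
def circleMeasure (g : ℝ → ℂ) : Measure (AddCircle (1:ℝ)) :=
  Measure.map (fun θ : ℝ => (θ : AddCircle (1:ℝ)))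
    (volume.withDensity fun θ => (‖g θ‖₊ : ℝ≥0∞) ^ (2:ℝ))

lemma circle_lintegral (g : ℝ → ℂ) (hg : Measurable g) {F : AddCircle (1:ℝ) → ℝ≥0∞}
    (hF : Measurable F) :
    ∫⁻ x, F x ∂(circleMeasure g)
      = ∫⁻ θ, ((‖g θ‖₊ : ℝ≥0∞) ^ (2:ℝ)) * F (θ : AddCircle (1:ℝ)) ∂volume := by
  rw [circleMeasure, lintegral_map hF measurable_mk1,
    lintegral_withDensity_eq_lintegral_mul _ (by fun_prop) (show Measurable fun θ : ℝ => F (θ : AddCircle (1:ℝ)) from hF.comp measurable_mk1)]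
  rfl

lemma elp_circle (g : ℝ → ℂ) (hg : Measurable g) {F : AddCircle (1:ℝ) → ℂ}
    (hF : Measurable F) :
    eLpNorm F 2 (circleMeasure g)
      = eLpNorm (fun θ : ℝ => F (θ : AddCircle (1:ℝ)) * g θ) 2 volume := by
  rw [elp2_eq, elp2_eq]
  congr 1
  rw [circle_lintegral g hg (by fun_prop)]
  refine lintegral_congr fun θ => ?_
  rw [nnnorm_mul, ENNReal.coe_mul,
    ENNReal.mul_rpow_of_nonneg _ _ (by norm_num : (0:ℝ) ≤ 2)]
  ring

lemma circleMeasure_finite (g : ℝ → ℂ) (hg : Measurable g) (hg2 : MemLp g 2 volume) :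
    IsFiniteMeasure (circleMeasure g) := by
  constructor
  have h1 : (circleMeasure g) univ = ∫⁻ θ, (‖g θ‖₊ : ℝ≥0∞) ^ (2:ℝ) ∂volume := by
    have := circle_lintegral g hg (F := fun _ => 1) measurable_const
    simpa using this
  rw [h1]
  have h2 := hg2.2
  rw [elp2_eq] at h2
  by_contra hcon
  push_neg at hcon
  have : (∫⁻ θ, (‖g θ‖₊ : ℝ≥0∞) ^ (2:ℝ) ∂volume) = ⊤ := top_le_iff.mp hcon
  rw [this] at h2
  simp [ENNReal.top_rpow_of_pos (by norm_num : (0:ℝ) < 1/2)] at h2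


lemma coeFn_finset_sum {ι : Type*} (s : Finset ι) (v : ι → E2) :
    ((∑ i ∈ s, v i : E2) : ℝ → ℂ) =ᵐ[volume] fun θ => ∑ i ∈ s, (v i : ℝ → ℂ) θ := by
  induction s using Finset.cons_induction with
  | empty => simp only [Finset.sum_empty]; exact Lp.coeFn_zero (E := ℂ) 2 (volume : Measure ℝ)
  | cons i s hi ih =>
    rw [Finset.sum_cons]
    filter_upwards [Lp.coeFn_add (v i) (∑ j ∈ s, v j), ih] with θ h1 h2
    rw [Finset.sum_cons, h1, Pi.add_apply, h2]

lemma span_repr {M : Type*} [AddCommMonoid M] [Module ℂ M] {ι : Type*} (v : ι → M) {x : M}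
    (hx : x ∈ span ℂ (range v)) :
    ∃ c : ι →₀ ℂ, x = ∑ i ∈ c.support, c i • v i := by
  obtain ⟨c, hc⟩ := Finsupp.mem_span_range_iff_exists_finsupp.mp hx
  exact ⟨c, by rw [← hc]; rfl⟩

lemma cm_sum_apply {ι : Type*} (s : Finset ι) (w : ι → C(AddCircle (1:ℝ), ℂ))
    (z : AddCircle (1:ℝ)) : (∑ i ∈ s, w i) z = ∑ i ∈ s, w i z := by
  induction s using Finset.cons_induction with
  | empty => simp
  | cons i s hi ih => rw [Finset.sum_cons, Finset.sum_cons, ContinuousMap.add_apply, ih]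

lemma span_fwd
    (T : E2 ≃L[ℂ] E2)
    (hT : ∀ f : E2, ∀ᵐ x : ℝ, (T f : ℝ → ℂ) x = (f : ℝ → ℂ) (x - 1))
    (F2 : E2 ≃ₗᵢ[ℂ] E2)
    (hF2 : ∀ (g : ℝ → ℂ), Integrable g → ∀ hg2 : MemLp g 2 (volume : Measure ℝ),
      (F2 (hg2.toLp g) : ℝ → ℂ) =ᵐ[volume] fun y : ℝ =>
        ∫ x : ℝ, g x * Complex.exp (-2 * (Real.pi : ℂ) * Complex.I * (x : ℂ) * (y : ℂ)))
    (φ : E2) {x : E2}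
    (hx : x ∈ span ℂ (range fun k : ℤ => F2 ((T ^ k) φ))) :
    ∃ Fc ∈ span ℂ (range (fourier (T := (1:ℝ)))),
      (x : ℝ → ℂ) =ᵐ[volume]
        fun θ => Fc (θ : AddCircle (1:ℝ)) * (F2 φ : ℝ → ℂ) θ := by
  obtain ⟨c, hc⟩ := span_repr _ hx
  refine ⟨∑ k ∈ c.support, c k • fourier (-k), ?_, ?_⟩
  · exact sum_mem fun k _ => smul_mem _ _ (subset_span ⟨-k, rfl⟩)
  have h1 := coeFn_finset_sum c.support (fun k => c k • F2 ((T ^ k) φ))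
  have h2 : ∀ᵐ θ ∂(volume : Measure ℝ), ∀ k ∈ c.support,
      (F2 ((T ^ k) φ) : ℝ → ℂ) θ = eK k θ * (F2 φ : ℝ → ℂ) θ :=
    (eventually_all_finset _).mpr fun k _ => shift_pow T hT F2 hF2 φ k
  have h3 : ∀ᵐ θ ∂(volume : Measure ℝ), ∀ k ∈ c.support,
      ((c k • F2 ((T ^ k) φ) : E2) : ℝ → ℂ) θ = c k • (F2 ((T ^ k) φ) : ℝ → ℂ) θ :=
    (eventually_all_finset _).mpr fun k _ => Lp.coeFn_smul (c k) (F2 ((T ^ k) φ))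
  rw [hc]
  filter_upwards [h1, h2, h3] with θ hθ1 hθ2 hθ3
  rw [hθ1, Finset.sum_congr rfl (fun k hk => by
    rw [hθ3 k hk, smul_eq_mul, hθ2 k hk])]
  have h4 : ((∑ k ∈ c.support, c k • fourier (-k) : C(AddCircle (1:ℝ), ℂ))
      ((θ : AddCircle (1:ℝ)))) = ∑ k ∈ c.support, c k * eK k θ := by
    rw [cm_sum_apply]
    exact Finset.sum_congr rfl fun k _ => by
      rw [ContinuousMap.smul_apply, fourier_eq_eK, smul_eq_mul]
  rw [h4, Finset.sum_mul]
  exact Finset.sum_congr rfl fun k _ => (mul_assoc _ _ _).symm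

lemma span_bwd
    (T : E2 ≃L[ℂ] E2)
    (hT : ∀ f : E2, ∀ᵐ x : ℝ, (T f : ℝ → ℂ) x = (f : ℝ → ℂ) (x - 1))
    (F2 : E2 ≃ₗᵢ[ℂ] E2)
    (hF2 : ∀ (g : ℝ → ℂ), Integrable g → ∀ hg2 : MemLp g 2 (volume : Measure ℝ),
      (F2 (hg2.toLp g) : ℝ → ℂ) =ᵐ[volume] fun y : ℝ =>
        ∫ x : ℝ, g x * Complex.exp (-2 * (Real.pi : ℂ) * Complex.I * (x : ℂ) * (y : ℂ)))
    (φ : E2) {Fc : C(AddCircle (1:ℝ), ℂ)}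
    (hFc : Fc ∈ span ℂ (range (fourier (T := (1:ℝ))))) :
    ∃ x ∈ span ℂ (range fun k : ℤ => F2 ((T ^ k) φ)),
      (x : ℝ → ℂ) =ᵐ[volume]
        fun θ => Fc (θ : AddCircle (1:ℝ)) * (F2 φ : ℝ → ℂ) θ := by
  obtain ⟨c, hc⟩ := span_repr _ hFc
  refine ⟨∑ n ∈ c.support, c n • F2 ((T ^ (-n)) φ), ?_, ?_⟩
  · exact sum_mem fun n _ => smul_mem _ _ (subset_span ⟨-n, rfl⟩)
  have h1 := coeFn_finset_sum c.support (fun n => c n • F2 ((T ^ (-n)) φ))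
  have h2 : ∀ᵐ θ ∂(volume : Measure ℝ), ∀ n ∈ c.support,
      (F2 ((T ^ (-n)) φ) : ℝ → ℂ) θ = eK (-n) θ * (F2 φ : ℝ → ℂ) θ :=
    (eventually_all_finset _).mpr fun n _ => shift_pow T hT F2 hF2 φ (-n)
  have h3 : ∀ᵐ θ ∂(volume : Measure ℝ), ∀ n ∈ c.support,
      ((c n • F2 ((T ^ (-n)) φ) : E2) : ℝ → ℂ) θ = c n • (F2 ((T ^ (-n)) φ) : ℝ → ℂ) θ :=
    (eventually_all_finset _).mpr fun n _ => Lp.coeFn_smul (c n) (F2 ((T ^ (-n)) φ))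
  filter_upwards [h1, h2, h3] with θ hθ1 hθ2 hθ3
  rw [hθ1, Finset.sum_congr rfl (fun n hn => by
    rw [hθ3 n hn, smul_eq_mul, hθ2 n hn])]
  have h4 : Fc ((θ : AddCircle (1:ℝ))) = ∑ n ∈ c.support, c n * eK (-n) θ := by
    rw [hc, cm_sum_apply]
    refine Finset.sum_congr rfl fun n _ => ?_
    rw [ContinuousMap.smul_apply, smul_eq_mul]
    congr 1
    rw [show (n : ℤ) = -(-n) from (neg_neg n).symm, fourier_eq_eK]
    rw [neg_neg]
  rw [h4, Finset.sum_mul]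
  exact Finset.sum_congr rfl fun n _ => (mul_assoc _ _ _).symm


lemma mem_closure_span_map (L : E2 ≃ₗᵢ[ℂ] E2) {ι : Type*} (v : ι → E2) (f : E2) :
    f ∈ (span ℂ (range v)).topologicalClosure ↔
      L f ∈ (span ℂ (range fun i => L (v i))).topologicalClosure := by
  have hmem : ∀ (M : Submodule ℂ E2) (z : E2), z ∈ M.topologicalClosure ↔ z ∈ closure (M : Set E2) := by
    intro M z
    constructor <;> intro h
    · rw [← Submodule.topologicalClosure_coe]; exact h
    · rw [← Submodule.topologicalClosure_coe] at h; exact h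
  rw [hmem, hmem]
  have h0 : ((span ℂ (range fun i => L (v i)) : Submodule ℂ E2) : Set E2)
      = ⇑L '' ((span ℂ (range v) : Submodule ℂ E2) : Set E2) := by
    rw [show (range fun i => L (v i)) = ⇑L '' range v by rw [← range_comp]; rfl]
    rw [show span ℂ (⇑L '' range v)
      = Submodule.map (L.toLinearEquiv : E2 →ₗ[ℂ] E2) (span ℂ (range v)) from
        (Submodule.map_span _ _).symm]
    rfl
  rw [h0, show ⇑L '' ((span ℂ (range v) : Submodule ℂ E2) : Set E2)
      = ⇑L.toHomeomorph '' ((span ℂ (range v) : Submodule ℂ E2) : Set E2) from rfl,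
    ← L.toHomeomorph.image_closure]
  exact (L.toHomeomorph.injective.mem_set_image).symm


lemma mem_topClosure_iff (M : Submodule ℂ E2) (z : E2) :
    z ∈ M.topologicalClosure ↔ z ∈ closure (M : Set E2) := by
  constructor <;> intro h
  · rw [← Submodule.topologicalClosure_coe]; exact h
  · rw [← Submodule.topologicalClosure_coe] at h; exact h

lemma fourier_span_dense (g : ℝ → ℂ) [IsFiniteMeasure (circleMeasure g)] :
    ((span ℂ (range (fourier (T:=(1:ℝ))))).map
       ((ContinuousMap.toLp (E := ℂ) 2 (circleMeasure g) ℂ : C(AddCircle (1:ℝ), ℂ) →L[ℂ] Lp ℂ 2 (circleMeasure g)) : C(AddCircle (1:ℝ), ℂ) →ₗ[ℂ] Lp ℂ 2 (circleMeasure g))).topologicalClosure = ⊤ :=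
  (ContinuousMap.toLp_denseRange ℂ (circleMeasure g) ℂ
    (by norm_num)).topologicalClosure_map_submodule span_fourier_closure_eq_top

lemma main_bwd
    (T : E2 ≃L[ℂ] E2)
    (hT : ∀ f : E2, ∀ᵐ x : ℝ, (T f : ℝ → ℂ) x = (f : ℝ → ℂ) (x - 1))
    (F2 : E2 ≃ₗᵢ[ℂ] E2)
    (hF2 : ∀ (g : ℝ → ℂ), Integrable g → ∀ hg2 : MemLp g 2 (volume : Measure ℝ),
      (F2 (hg2.toLp g) : ℝ → ℂ) =ᵐ[volume] fun y : ℝ =>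
        ∫ x : ℝ, g x * Complex.exp (-2 * (Real.pi : ℂ) * Complex.I * (x : ℂ) * (y : ℂ)))
    (φ f : E2) (Hf : ℝ → ℂ) (hmeas : Measurable Hf)
    (hper : ∀ θ : ℝ, Hf (θ + 1) = Hf θ)
    (hmem : MemLp (fun θ : ℝ => Hf θ * (F2 φ : ℝ → ℂ) θ) 2 (volume : Measure ℝ))
    (heq : (F2 f : ℝ → ℂ) =ᵐ[volume] fun θ : ℝ => Hf θ * (F2 φ : ℝ → ℂ) θ) :
    F2 f ∈ (span ℂ (range fun k : ℤ => F2 ((T ^ k) φ))).topologicalClosure := by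
  set g : ℝ → ℂ := (F2 φ : ℝ → ℂ) with hgdef
  have hg : Measurable g := (Lp.stronglyMeasurable (F2 φ)).measurable
  have hg2 : MemLp g 2 volume := Lp.memLp (F2 φ)
  haveI := circleMeasure_finite g hg hg2
  -- the periodization of Hf to the circle
  set F : AddCircle (1:ℝ) → ℂ := fun z => Hf ((AddCircle.equivIco 1 0 z : ℝ)) with hFdef
  have hFmeas : Measurable F :=
    hmeas.comp (measurable_subtype_coe.comp (AddCircle.measurableEquivIco 1 0).measurable)
  have hper' : Function.Periodic Hf 1 := hper
  have hFπ : ∀ θ : ℝ, F (θ : AddCircle (1:ℝ)) = Hf θ := by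
    intro θ
    rw [hFdef]
    simp only
    rw [AddCircle.coe_equivIco_mk_apply]
    have h1 : Int.fract (θ / 1) * 1 = θ - (⌊θ⌋ : ℝ) := by
      rw [mul_one, div_one, Int.fract]
    rw [h1]
    have := hper'.sub_int_mul_eq (x := θ) ⌊θ⌋
    rw [mul_one] at this
    exact this
  have hFg : (fun θ : ℝ => F (θ : AddCircle (1:ℝ)) * g θ) = fun θ => Hf θ * g θ := by
    funext θ; rw [hFπ θ]
  have hFmem : MemLp F 2 (circleMeasure g) := by
    refine ⟨hFmeas.aestronglyMeasurable, ?_⟩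
    rw [elp_circle g hg hFmeas, hFg]
    exact hmem.2
  set QF := hFmem.toLp F with hQFdef
  have hQF_coe : (QF : AddCircle (1:ℝ) → ℂ) =ᵐ[circleMeasure g] F := hFmem.coeFn_toLp
  -- density
  have hdense := fourier_span_dense g
  have hQFmem : QF ∈ closure (((span ℂ (range (fourier (T:=(1:ℝ))))).map
      ((ContinuousMap.toLp (E := ℂ) 2 (circleMeasure g) ℂ : C(AddCircle (1:ℝ), ℂ) →L[ℂ] Lp ℂ 2 (circleMeasure g)) : C(AddCircle (1:ℝ), ℂ) →ₗ[ℂ] Lp ℂ 2 (circleMeasure g))) : Set (Lp ℂ 2 (circleMeasure g))) := by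
    rw [← Submodule.topologicalClosure_coe, hdense]
    trivial
  obtain ⟨v, hv_mem, hv_tendsto⟩ := mem_closure_iff_seq_limit.mp hQFmem
  have hFc : ∀ n, ∃ Fc : C(AddCircle (1:ℝ), ℂ), Fc ∈ span ℂ (range (fourier (T:=(1:ℝ)))) ∧
      (ContinuousMap.toLp (E := ℂ) 2 (circleMeasure g) ℂ) Fc = v n := fun n => by
    obtain ⟨Fc, h1, h2⟩ := Submodule.mem_map.mp (hv_mem n)
    exact ⟨Fc, h1, h2⟩
  choose Fc hFc_span hFc_eq using hFc
  have hx : ∀ n, ∃ x ∈ span ℂ (range fun k : ℤ => F2 ((T ^ k) φ)),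
      (x : ℝ → ℂ) =ᵐ[volume] fun θ => (Fc n) (θ : AddCircle (1:ℝ)) * g θ :=
    fun n => span_bwd T hT F2 hF2 φ (hFc_span n)
  choose x hx_mem hx_ae using hx
  -- norm identities
  have hnorm : ∀ n, ‖x n - F2 f‖ = ‖v n - QF‖ := by
    intro n
    have e1 : (‖x n - F2 f‖₊ : ℝ≥0∞) = (‖v n - QF‖₊ : ℝ≥0∞) := by
      rw [← elp_sub_eq_nnnorm (x n) (F2 f), ← elp_sub_eq_nnnorm (v n) QF]
      have hae : ((x n : ℝ → ℂ) - (F2 f : ℝ → ℂ)) =ᵐ[volume]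
          fun θ => (fun z => Fc n z - F z) (θ : AddCircle (1:ℝ)) * g θ := by
        filter_upwards [hx_ae n, heq] with θ h1 h2
        simp only [Pi.sub_apply]
        rw [h1, h2, ← hFπ θ]
        ring
      rw [eLpNorm_congr_ae hae, ← elp_circle g hg (F := fun z => Fc n z - F z) ((map_continuous (Fc n)).measurable.sub hFmeas)]
      refine eLpNorm_congr_ae ?_
      filter_upwards [ContinuousMap.coeFn_toLp (p := 2) (μ := circleMeasure g) (𝕜 := ℂ) (Fc n),
        hQF_coe] with z h1 h2
      rw [Pi.sub_apply, ← hFc_eq n, h1, h2]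
    have e2 : ‖x n - F2 f‖₊ = ‖v n - QF‖₊ := by exact_mod_cast e1
    calc ‖x n - F2 f‖ = (‖x n - F2 f‖₊ : ℝ) := rfl
      _ = (‖v n - QF‖₊ : ℝ) := by rw [e2]
      _ = ‖v n - QF‖ := rfl
  have hx_tendsto : Tendsto x atTop (𝓝 (F2 f)) := by
    rw [tendsto_iff_norm_sub_tendsto_zero]
    have := tendsto_iff_norm_sub_tendsto_zero.mp hv_tendsto
    simpa [hnorm] using this
  rw [mem_topClosure_iff]
  exact mem_closure_of_tendsto hx_tendsto (Eventually.of_forall hx_mem)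


lemma main_fwd
    (T : E2 ≃L[ℂ] E2)
    (hT : ∀ f : E2, ∀ᵐ x : ℝ, (T f : ℝ → ℂ) x = (f : ℝ → ℂ) (x - 1))
    (F2 : E2 ≃ₗᵢ[ℂ] E2)
    (hF2 : ∀ (g : ℝ → ℂ), Integrable g → ∀ hg2 : MemLp g 2 (volume : Measure ℝ),
      (F2 (hg2.toLp g) : ℝ → ℂ) =ᵐ[volume] fun y : ℝ =>
        ∫ x : ℝ, g x * Complex.exp (-2 * (Real.pi : ℂ) * Complex.I * (x : ℂ) * (y : ℂ)))
    (φ f : E2)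
    (hf : F2 f ∈ (span ℂ (range fun k : ℤ => F2 ((T ^ k) φ))).topologicalClosure) :
    ∃ Hf : ℝ → ℂ, Measurable Hf ∧ (∀ θ : ℝ, Hf (θ + 1) = Hf θ) ∧
      MemLp (fun θ : ℝ => Hf θ * (F2 φ : ℝ → ℂ) θ) 2 (volume : Measure ℝ) ∧
      (F2 f : ℝ → ℂ) =ᵐ[volume] fun θ : ℝ => Hf θ * (F2 φ : ℝ → ℂ) θ := by
  set g : ℝ → ℂ := (F2 φ : ℝ → ℂ) with hgdef
  have hg : Measurable g := (Lp.stronglyMeasurable (F2 φ)).measurable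
  have hg2 : MemLp g 2 volume := Lp.memLp (F2 φ)
  haveI := circleMeasure_finite g hg hg2
  rw [mem_topClosure_iff] at hf
  obtain ⟨x, hx_mem, hx_tendsto⟩ := mem_closure_iff_seq_limit.mp hf
  have hFc : ∀ n, ∃ Fc ∈ span ℂ (range (fourier (T := (1:ℝ)))),
      ((x n : E2) : ℝ → ℂ) =ᵐ[volume]
        fun θ => Fc (θ : AddCircle (1:ℝ)) * g θ :=
    fun n => span_fwd T hT F2 hF2 φ (hx_mem n)
  choose Fc hFc_span hFc_ae using hFc
  set q : ℕ → Lp ℂ 2 (circleMeasure g) :=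
    fun n => (ContinuousMap.toLp (E := ℂ) 2 (circleMeasure g) ℂ) (Fc n) with hqdef
  have hq_coe : ∀ n, (q n : AddCircle (1:ℝ) → ℂ) =ᵐ[circleMeasure g] Fc n :=
    fun n => ContinuousMap.coeFn_toLp (p := 2) (μ := circleMeasure g) (𝕜 := ℂ) (Fc n)
  -- distances match
  have hdist : ∀ n m, dist (q n) (q m) = dist (x n) (x m) := by
    intro n m
    have e1 : (‖q n - q m‖₊ : ℝ≥0∞) = (‖x n - x m‖₊ : ℝ≥0∞) := by
      rw [← elp_sub_eq_nnnorm (q n) (q m), ← elp_sub_eq_nnnorm (x n) (x m)]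
      have hae1 : ((q n : AddCircle (1:ℝ) → ℂ) - (q m : AddCircle (1:ℝ) → ℂ))
          =ᵐ[circleMeasure g] fun z => Fc n z - Fc m z := by
        filter_upwards [hq_coe n, hq_coe m] with z h1 h2
        rw [Pi.sub_apply, h1, h2]
      rw [eLpNorm_congr_ae hae1,
        elp_circle g hg (F := fun z => Fc n z - Fc m z) ((map_continuous (Fc n)).measurable.sub (map_continuous (Fc m)).measurable)]
      refine eLpNorm_congr_ae ?_
      filter_upwards [hFc_ae n, hFc_ae m] with θ h1 h2
      rw [Pi.sub_apply, h1, h2]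
      ring
    have e2 : ‖q n - q m‖₊ = ‖x n - x m‖₊ := by exact_mod_cast e1
    rw [dist_eq_norm, dist_eq_norm]
    calc ‖q n - q m‖ = (‖q n - q m‖₊ : ℝ) := rfl
      _ = (‖x n - x m‖₊ : ℝ) := by rw [e2]
      _ = ‖x n - x m‖ := rfl
  have hcauchy : CauchySeq q := by
    have hx_c := hx_tendsto.cauchySeq
    rw [Metric.cauchySeq_iff] at hx_c ⊢
    intro ε hε
    obtain ⟨N, hN⟩ := hx_c ε hε
    exact ⟨N, fun m hm n hn => by rw [hdist m n]; exact hN m hm n hn⟩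
  obtain ⟨Q, hQ⟩ := cauchySeq_tendsto_of_complete hcauchy
  set F : AddCircle (1:ℝ) → ℂ := (Q : AddCircle (1:ℝ) → ℂ) with hFdef
  have hFmeas : Measurable F := (Lp.stronglyMeasurable Q).measurable
  refine ⟨fun θ : ℝ => F (θ : AddCircle (1:ℝ)), hFmeas.comp measurable_mk1, ?_, ?_⟩
  · intro θ
    show F ((θ + 1 : ℝ) : AddCircle (1:ℝ)) = F (θ : AddCircle (1:ℝ))
    rw [AddCircle.coe_add_period 1 θ]
  -- the L² identity
  have haesm : AEStronglyMeasurable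
      ((F2 f : ℝ → ℂ) - fun θ : ℝ => F (θ : AddCircle (1:ℝ)) * g θ) volume :=
    (Lp.aestronglyMeasurable (F2 f)).sub
      ((hFmeas.comp measurable_mk1).aestronglyMeasurable.mul hg.aestronglyMeasurable)
  set A := eLpNorm ((F2 f : ℝ → ℂ) - fun θ : ℝ => F (θ : AddCircle (1:ℝ)) * g θ) 2 volume with hA
  have hbound : ∀ n, A ≤ (‖x n - F2 f‖₊ : ℝ≥0∞) + (‖q n - Q‖₊ : ℝ≥0∞) := by
    intro n
    have hsplit : ((F2 f : ℝ → ℂ) - fun θ : ℝ => F (θ : AddCircle (1:ℝ)) * g θ)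
        =ᵐ[volume] fun θ => ((F2 f : ℝ → ℂ) θ - ((x n : E2) : ℝ → ℂ) θ)
          + ((fun z => Fc n z - F z) (θ : AddCircle (1:ℝ)) * g θ) := by
      filter_upwards [hFc_ae n] with θ h1
      rw [Pi.sub_apply]
      rw [h1]
      ring
    rw [hA, eLpNorm_congr_ae hsplit]
    refine le_trans (eLpNorm_add_le
      ((Lp.aestronglyMeasurable (F2 f)).sub (Lp.aestronglyMeasurable (x n)))
      ((((map_continuous (Fc n)).measurable.sub hFmeas).comp
        measurable_mk1).aestronglyMeasurable.mul hg.aestronglyMeasurable)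
      one_le_two) ?_
    have e1 : eLpNorm (fun θ : ℝ => (F2 f : ℝ → ℂ) θ - ((x n : E2) : ℝ → ℂ) θ) 2 volume
        = (‖x n - F2 f‖₊ : ℝ≥0∞) := by
      rw [show (fun θ : ℝ => (F2 f : ℝ → ℂ) θ - ((x n : E2) : ℝ → ℂ) θ)
          = ((F2 f : ℝ → ℂ) - ((x n : E2) : ℝ → ℂ)) from rfl,
        elp_sub_eq_nnnorm, ← nnnorm_neg, neg_sub]
    have e2 : eLpNorm (fun θ : ℝ => (fun z => Fc n z - F z) (θ : AddCircle (1:ℝ)) * g θ) 2 volume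
        = (‖q n - Q‖₊ : ℝ≥0∞) := by
      rw [← elp_circle g hg (F := fun z => Fc n z - F z) ((map_continuous (Fc n)).measurable.sub hFmeas),
        ← elp_sub_eq_nnnorm (q n) Q]
      refine eLpNorm_congr_ae ?_
      filter_upwards [hq_coe n] with z h1
      rw [Pi.sub_apply, h1]
    rw [e1, e2]
  have hsum := (conv_nnnorm x (F2 f) hx_tendsto).add (conv_nnnorm q Q hQ)
  rw [add_zero] at hsum
  have hA0 : A = 0 := le_antisymm (ge_of_tendsto' hsum hbound) (zero_le)
  have hzero := (eLpNorm_eq_zero_iff haesm (by norm_num)).mp hA0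
  have hae : (F2 f : ℝ → ℂ) =ᵐ[volume] fun θ : ℝ => F (θ : AddCircle (1:ℝ)) * g θ := by
    filter_upwards [hzero] with θ hθ
    have h2 : (F2 f : ℝ → ℂ) θ - F (θ : AddCircle (1:ℝ)) * g θ = 0 := hθ
    linear_combination h2
  exact ⟨(Lp.memLp (F2 f)).ae_eq hae, hae⟩

end SIH15

/-- A function `f ∈ L²(ℝ)` belongs to `V₀`, the closure of the span of the integer
translates of `φ`, if and only if `f̂ = H·φ̂` for some `1`-periodic measurable function
`H : ℝ → ℂ` with `H·φ̂ ∈ L²(ℝ)`.  Here `F2` is the Fourier–Plancherel transform on `L²(ℝ)`,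
characterized on `L¹ ∩ L²` by the Fourier integral. -/
theorem stmt15
    (T : Lp ℂ 2 (volume : Measure ℝ) ≃L[ℂ] Lp ℂ 2 (volume : Measure ℝ))
    (hT : ∀ f : Lp ℂ 2 (volume : Measure ℝ),
      ∀ᵐ x : ℝ, (T f : ℝ → ℂ) x = (f : ℝ → ℂ) (x - 1))
    (F2 : Lp ℂ 2 (volume : Measure ℝ) ≃ₗᵢ[ℂ] Lp ℂ 2 (volume : Measure ℝ))
    (hF2 : ∀ (g : ℝ → ℂ), Integrable g → ∀ hg2 : MemLp g 2 (volume : Measure ℝ),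
      (F2 (hg2.toLp g) : ℝ → ℂ) =ᵐ[volume] fun y : ℝ =>
        ∫ x : ℝ, g x * Complex.exp (-2 * (Real.pi : ℂ) * Complex.I * (x : ℂ) * (y : ℂ)))
    (φ f : Lp ℂ 2 (volume : Measure ℝ)) :
    f ∈ (Submodule.span ℂ (Set.range fun k : ℤ => (T ^ k) φ)).topologicalClosure ↔
      ∃ Hf : ℝ → ℂ, Measurable Hf ∧ (∀ θ : ℝ, Hf (θ + 1) = Hf θ) ∧
        MemLp (fun θ : ℝ => Hf θ * (F2 φ : ℝ → ℂ) θ) 2 (volume : Measure ℝ) ∧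
        (F2 f : ℝ → ℂ) =ᵐ[volume] fun θ : ℝ => Hf θ * (F2 φ : ℝ → ℂ) θ := by
  have hiff := SIH15.mem_closure_span_map F2 (fun k : ℤ => (T ^ k) φ) f
  constructor
  · intro h
    exact SIH15.main_fwd T hT F2 hF2 φ f (hiff.mp h)
  · rintro ⟨Hf, h1, h2, h3, h4⟩
    exact hiff.mpr (SIH15.main_bwd T hT F2 hF2 φ f Hf h1 h2 h3 h4)
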